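/- Let n = 2m with m ≥ 1, q = 2^n, and for x ∈ F_q write x̄ = x^{2^m}. Let D = {x ∈ F_q^* : Tr^m(x + x̄) = Tr^m(x·x̄) = 1}, where Tr^m : F_{2^m} → F_2 is the absolute trace (note x + x̄ and x·x̄ lie in F_{2^m}). Then |D| = 2^{n−2} if m is even, and |D| = 2^{n−2} + 2^{m−1} if m is odd. -/

import Mathlib

open scoped Classical

noncomputable instance (n : ℕ) : Fintype (GaloisField 2 n) := Fintype.ofFinite _

/-- The conjugate `x̄ = x^(2^m)` of `x ∈ F_{2^(2m)}` over the subfield `F_{2^m}`. -/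
noncomputable def fieldConj (m : ℕ) (x : GaloisField 2 (2 * m)) : GaloisField 2 (2 * m) :=
  x ^ (2 ^ m)

/-- The absolute trace `Tr^m : F_{2^m} → F_2` of the subfield `F_{2^m}`,
computed inside `F_{2^(2m)}` by the formula `Tr^m(y) = ∑_{i<m} y^(2^i)`;
for `y` in the subfield `F_{2^m}` its value lies in `F_2 = {0,1}`. -/
noncomputable def subTr (m : ℕ) (y : GaloisField 2 (2 * m)) : GaloisField 2 (2 * m) :=
  ∑ i ∈ Finset.range m, y ^ (2 ^ i)

/-- The set `D = {x ∈ F_q^* : Tr^m(x + x̄) = Tr^m(x·x̄) = 1}`, `q = 2^(2m)`. -/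
noncomputable def Dtwo (m : ℕ) : Finset (GaloisField 2 (2 * m)) :=
  Finset.univ.filter (fun x : GaloisField 2 (2 * m) => x ≠ 0 ∧
    subTr m (x + fieldConj m x) = 1 ∧ subTr m (x * fieldConj m x) = 1)

namespace CardDtwoAux

open Finset Polynomial

abbrev Fq (m : ℕ) := GaloisField 2 (2 * m)

noncomputable def ptr (m k : ℕ) (y : Fq m) : Fq m := ∑ i ∈ Finset.range k, y ^ (2 ^ i)

variable {m : ℕ}

lemma ptr_zero (k : ℕ) : ptr m k 0 = 0 :=
  Finset.sum_eq_zero fun i _ => zero_pow (by positivity)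

lemma ptr_add (k : ℕ) (x y : Fq m) : ptr m k (x + y) = ptr m k x + ptr m k y := by
  unfold ptr
  rw [← Finset.sum_add_distrib]
  exact Finset.sum_congr rfl fun i _ => add_pow_char_pow x y 2 i

lemma ptr_sq (k : ℕ) (x : Fq m) (hx : x ^ 2 ^ k = x) :
    ptr m k x * ptr m k x = ptr m k x := by
  have hfr : ptr m k x * ptr m k x = ∑ i ∈ Finset.range k, x ^ 2 ^ (i + 1) := by
    have := map_sum (frobenius (Fq m) 2) (fun i => x ^ 2 ^ i) (Finset.range k)
    simp only [frobenius_def, ptr, pow_two] at this ⊢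
    rw [this]
    refine Finset.sum_congr rfl fun i _ => ?_
    rw [← pow_add]
    congr 1
    rw [pow_succ]
    ring
  have h2 : (∑ i ∈ Finset.range k, x ^ 2 ^ (i + 1)) + x = ptr m k x + x := by
    calc (∑ i ∈ Finset.range k, x ^ 2 ^ (i + 1)) + x
        = ∑ i ∈ Finset.range (k + 1), x ^ 2 ^ i := by
          rw [Finset.sum_range_succ' (fun i => x ^ 2 ^ i) k]; simp
      _ = ptr m k x + x ^ 2 ^ k := Finset.sum_range_succ _ k
      _ = ptr m k x + x := by rw [hx]
  rw [hfr, add_right_cancel h2]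

lemma ptr_dichotomy (k : ℕ) (x : Fq m) (hx : x ^ 2 ^ k = x) :
    ptr m k x = 0 ∨ ptr m k x = 1 := by
  have h := ptr_sq k x hx
  have : ptr m k x * (ptr m k x - 1) = 0 := by linear_combination h
  rcases mul_eq_zero.mp this with h1 | h1
  · exact Or.inl h1
  · exact Or.inr (by linear_combination h1)

-- vanishing bound
lemma ptr_vanish_card (hm : 1 ≤ m) (k : ℕ) (hk : 1 ≤ k) :
    (Finset.univ.filter (fun x : Fq m => ptr m k x = 0)).card ≤ 2 ^ (k - 1) := by
  set P : Polynomial (Fq m) := ∑ i ∈ Finset.range k, X ^ (2 ^ i) with hP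
  have heval : ∀ x : Fq m, P.eval x = ptr m k x := by
    intro x
    simp [hP, ptr, Polynomial.eval_finset_sum]
  have hcoeff : P.coeff (2 ^ (k - 1)) = 1 := by
    rw [hP, Polynomial.finset_sum_coeff]
    have : ∀ i ∈ Finset.range k, (X ^ (2 ^ i) : Polynomial (Fq m)).coeff (2 ^ (k - 1))
        = if i = k - 1 then 1 else 0 := by
      intro i hi
      rw [Polynomial.coeff_X_pow]
      by_cases h : i = k - 1
      · simp [h]
      · have hne : 2 ^ i ≠ 2 ^ (k - 1) := fun hh => h (Nat.pow_right_injective (le_refl 2) hh)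
        rw [if_neg (fun hh => hne hh.symm), if_neg h]
    rw [Finset.sum_congr rfl this, Finset.sum_ite_eq' (Finset.range k) (k - 1)]
    simp [Nat.sub_lt_of_pos_le Nat.one_pos hk]
  have hPne : P ≠ 0 := fun h => by simp [h] at hcoeff
  have hdeg : P.natDegree ≤ 2 ^ (k - 1) := by
    refine Polynomial.natDegree_sum_le_of_forall_le _ _ fun i hi => ?_
    rw [Polynomial.natDegree_X_pow]
    have := Finset.mem_range.mp hi
    exact Nat.pow_le_pow_right (by norm_num) (by omega)
  have hsub : (Finset.univ.filter (fun x : Fq m => ptr m k x = 0)) ⊆ P.roots.toFinset := by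
    intro x hx
    simp only [Finset.mem_filter] at hx
    rw [Multiset.mem_toFinset, Polynomial.mem_roots hPne]
    show P.eval x = 0
    rw [heval]; exact hx.2
  calc (Finset.univ.filter (fun x : Fq m => ptr m k x = 0)).card
      ≤ P.roots.toFinset.card := Finset.card_le_card hsub
    _ ≤ Multiset.card P.roots := Multiset.toFinset_card_le _
    _ ≤ P.natDegree := Polynomial.card_roots' P
    _ ≤ 2 ^ (k - 1) := hdeg

lemma two_mul_m_ne : m ≥ 1 → 2 * m ≠ 0 := by omega

lemma card_Fq (hm : 1 ≤ m) : Fintype.card (Fq m) = 2 ^ (2 * m) := by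
  rw [← Nat.card_eq_fintype_card]
  exact GaloisField.card 2 (2 * m) (by omega)

lemma pow_card_fq (hm : 1 ≤ m) (x : Fq m) : x ^ 2 ^ (2 * m) = x := by
  rw [← card_Fq hm]
  exact FiniteField.pow_card x

/-- counting lemma : in a set closed under adding an element of value 1,
    the value-1 locus is exactly half. -/
lemma pair_count (A : Finset (Fq m)) (f : Fq m → Fq m)
    (hvals : ∀ x ∈ A, f x = 0 ∨ f x = 1) (x₀ : Fq m)
    (hclosed : ∀ x ∈ A, x + x₀ ∈ A) (hadd : ∀ x ∈ A, f (x + x₀) = f x + 1) :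
    2 * (A.filter (fun x => f x = 1)).card = A.card := by
  have hchar : ∀ a : Fq m, a + a = 0 := CharTwo.add_self_eq_zero
  have hsplit := Finset.card_filter_add_card_filter_not (s := A)
      (p := fun x => f x = 1)
  have hneg : A.filter (fun x => ¬ f x = 1) = A.filter (fun x => f x = 0) := by
    apply Finset.filter_congr
    intro x hx
    rcases hvals x hx with h | h <;> simp [h]
  rw [hneg] at hsplit
  have hbij : (A.filter (fun x => f x = 1)).card = (A.filter (fun x => f x = 0)).card := by
    apply Finset.card_nbij' (fun x => x + x₀) (fun x => x + x₀)
    · intro a ha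
      simp only [Finset.mem_coe, Finset.mem_filter] at ha ⊢
      refine ⟨hclosed a ha.1, ?_⟩
      rw [hadd a ha.1, ha.2, ← hchar 1]
    · intro a ha
      simp only [Finset.mem_coe, Finset.mem_filter] at ha ⊢
      refine ⟨hclosed a ha.1, ?_⟩
      rw [hadd a ha.1, ha.2, zero_add]
    · intro a _; show a + x₀ + x₀ = a; rw [add_assoc, hchar, add_zero]
    · intro a _; show a + x₀ + x₀ = a; rw [add_assoc, hchar, add_zero]
  omega

lemma exists_ptr_one (hm : 1 ≤ m) (k : ℕ) (hk : 1 ≤ k) (A : Finset (Fq m))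
    (hcard : 2 ^ (k - 1) < A.card) (hA : ∀ x ∈ A, x ^ 2 ^ k = x) :
    ∃ x ∈ A, ptr m k x = 1 := by
  by_contra h
  push_neg at h
  have hsub : A ⊆ Finset.univ.filter (fun x : Fq m => ptr m k x = 0) := by
    intro x hx
    simp only [Finset.mem_filter, Finset.mem_univ, true_and]
    rcases ptr_dichotomy k x (hA x hx) with h0 | h1
    · exact h0
    · exact absurd h1 (h x hx)
  exact absurd (Finset.card_le_card hsub) (by
    have := ptr_vanish_card (m := m) hm k hk
    omega)

/-- the norm `x^(2^m+1)` lands in the subfield. -/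
lemma norm_mem (hm : 1 ≤ m) (x : Fq m) : (x ^ (2 ^ m + 1)) ^ 2 ^ m = x ^ (2 ^ m + 1) := by
  rw [← pow_mul]
  have h1 : (2 ^ m + 1) * 2 ^ m = 2 ^ (2 * m) + 2 ^ m := by
    rw [add_mul, one_mul, ← pow_add, two_mul]
  rw [h1, pow_add, pow_card_fq hm x]
  rw [← pow_succ']

/-- number of solutions of `x ^ n = c`, `c ≠ 0`, is at most `n`. -/
lemma pow_eq_card_le (n : ℕ) (hn : 1 ≤ n) (c : Fq m) (hc : c ≠ 0) :
    (Finset.univ.filter (fun x : Fq m => x ^ n = c)).card ≤ n := by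
  have hPne : (X ^ n - C c : Polynomial (Fq m)) ≠ 0 := X_pow_sub_C_ne_zero (by omega) c
  have hsub : (Finset.univ.filter (fun x : Fq m => x ^ n = c))
      ⊆ (X ^ n - C c : Polynomial (Fq m)).roots.toFinset := by
    intro x hx
    simp only [Finset.mem_filter, Finset.mem_univ, true_and] at hx
    rw [Multiset.mem_toFinset, Polynomial.mem_roots hPne]
    show (X ^ n - C c : Polynomial (Fq m)).eval x = 0
    simp [hx]
  calc (Finset.univ.filter (fun x : Fq m => x ^ n = c)).card
      ≤ _ := Finset.card_le_card hsub
    _ ≤ Multiset.card (X ^ n - C c : Polynomial (Fq m)).roots := Multiset.toFinset_card_le _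
    _ ≤ _ := Polynomial.card_roots' _
    _ ≤ n := by rw [Polynomial.natDegree_X_pow_sub_C]

/-- fibers of the norm over nonzero values all have the same size. -/
lemma fiber_card_eq (k : ℕ) (hk : 1 ≤ k) (y : Fq m) (hy : y ≠ 0) (x₀ : Fq m) (hx₀ : x₀ ^ k = y) :
    (Finset.univ.filter (fun x : Fq m => x ^ k = y)).card
      = (Finset.univ.filter (fun x : Fq m => x ^ k = 1)).card := by
  have hx₀ne : x₀ ≠ 0 := by
    rintro rfl
    exact hy (by rw [← hx₀, zero_pow (by omega : k ≠ 0)])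
  apply Finset.card_nbij' (fun x => x * x₀⁻¹) (fun x => x * x₀)
  · intro a ha
    simp only [Finset.mem_coe, Finset.mem_filter, Finset.mem_univ, true_and] at ha ⊢
    rw [mul_pow, ha, ← hx₀, inv_pow, mul_inv_cancel₀ (pow_ne_zero _ hx₀ne)]
  · intro a ha
    simp only [Finset.mem_coe, Finset.mem_filter, Finset.mem_univ, true_and] at ha ⊢
    rw [mul_pow, ha, one_mul, hx₀]
  · intro a _; field_simp
  · intro a _; field_simp

lemma key_counts (hm : 1 ≤ m) :
    (Finset.univ.filter (fun y : Fq m => y ^ 2 ^ m = y ∧ y ≠ 0)).card = 2 ^ m - 1 ∧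
    (∀ y : Fq m, y ^ 2 ^ m = y → y ≠ 0 →
      (Finset.univ.filter (fun x : Fq m => x ^ (2 ^ m + 1) = y)).card = 2 ^ m + 1) := by
  have h2m : 2 ≤ 2 ^ m := by
    calc 2 = 2 ^ 1 := (pow_one 2).symm
    _ ≤ 2 ^ m := Nat.pow_le_pow_right (by norm_num) hm
  set k : ℕ := 2 ^ m + 1 with hk
  set NZ : Finset (Fq m) := Finset.univ.filter (fun x : Fq m => x ≠ 0) with hNZ
  set Img : Finset (Fq m) := NZ.image (fun x => x ^ k) with hImg
  set Kset : Finset (Fq m) := Finset.univ.filter (fun x : Fq m => x ^ k = 1) with hKset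
  set Sstar : Finset (Fq m) :=
    Finset.univ.filter (fun y : Fq m => y ^ 2 ^ m = y ∧ y ≠ 0) with hSstar
  -- cardinality of NZ
  have hNZcard : NZ.card = 2 ^ (2 * m) - 1 := by
    rw [hNZ, Finset.filter_ne' Finset.univ 0, Finset.card_erase_of_mem (Finset.mem_univ 0),
      Finset.card_univ, card_Fq hm]
  -- every element of Img is nonzero and a subfield element
  have hImgsub : Img ⊆ Sstar := by
    intro y hy
    rw [hImg, Finset.mem_image] at hy
    obtain ⟨x, hx, rfl⟩ := hy
    rw [hNZ, Finset.mem_filter] at hx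
    rw [hSstar, Finset.mem_filter]
    exact ⟨Finset.mem_univ _, norm_mem hm x, pow_ne_zero _ hx.2⟩
  -- counting NZ fiberwise over Img
  have hfib : NZ.card = Img.card * Kset.card := by
    have h1 : NZ.card = ∑ y ∈ Img, (NZ.filter (fun x => x ^ k = y)).card := by
      apply Finset.card_eq_sum_card_fiberwise
      intro x hx
      rw [Finset.mem_coe, Finset.mem_image]
      exact ⟨x, hx, rfl⟩
    rw [h1]
    rw [Finset.sum_congr rfl (fun y hy => ?_), Finset.sum_const, smul_eq_mul]
    -- each fiber has card Kset.card
    obtain ⟨x₀, hx₀NZ, hx₀⟩ := Finset.mem_image.mp (hImg ▸ hy)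
    have hx₀ne : x₀ ≠ 0 := by
      have h' := hx₀NZ
      rw [hNZ, Finset.mem_filter] at h'
      exact h'.2
    have hyne : y ≠ 0 := by rw [← hx₀]; exact pow_ne_zero _ hx₀ne
    have : NZ.filter (fun x => x ^ k = y) = Finset.univ.filter (fun x : Fq m => x ^ k = y) := by
      ext x
      simp only [hNZ, Finset.filter_filter, Finset.mem_filter, Finset.mem_univ, true_and]
      constructor
      · exact fun h => h.2
      · intro h
        refine ⟨fun h0 => hyne ?_, h⟩
        rw [← h, h0, zero_pow (by omega : k ≠ 0)]
    rw [this]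
    exact fiber_card_eq k (by omega) y hyne x₀ hx₀
  -- bounds
  have hSstarle : Sstar.card ≤ 2 ^ m - 1 := by
    have hsub : Sstar ⊆ Finset.univ.filter (fun y : Fq m => y ^ (2 ^ m - 1) = 1) := by
      intro y hy
      rw [hSstar, Finset.mem_filter] at hy
      obtain ⟨-, hy1, hy2⟩ := hy
      rw [Finset.mem_filter]
      refine ⟨Finset.mem_univ _, ?_⟩
      have : y ^ (2 ^ m - 1) * y = 1 * y := by
        rw [one_mul, ← pow_succ]
        rw [(by omega : 2 ^ m - 1 + 1 = 2 ^ m), hy1]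
      exact mul_right_cancel₀ hy2 this
    calc Sstar.card ≤ _ := Finset.card_le_card hsub
      _ ≤ 2 ^ m - 1 := pow_eq_card_le _ (by omega) 1 one_ne_zero
  have hKle : Kset.card ≤ k := pow_eq_card_le _ (by omega) 1 one_ne_zero
  have hImgle : Img.card ≤ 2 ^ m - 1 := le_trans (Finset.card_le_card hImgsub) hSstarle
  -- the product identity
  have hprod : (2 ^ m - 1) * k = 2 ^ (2 * m) - 1 := by
    have h2 : 2 ^ (2 * m) = 2 ^ m * 2 ^ m := by rw [two_mul, pow_add]
    have h3 : 2 ^ m * 2 ^ m = (2 ^ m - 1) * k + 1 := by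
      obtain ⟨b, hb⟩ : ∃ b, 2 ^ m = b + 2 := ⟨2 ^ m - 2, by omega⟩
      rw [hk, hb]
      have : (b + 2) * (b + 2) = (b + 2 - 1) * (b + 2 + 1) + 1 := by
        rw [(by omega : b + 2 - 1 = b + 1)]; ring
      exact this
    omega
  -- forcing equalities
  have hKpos : 0 < 2 ^ m - 1 := by omega
  have hineq : NZ.card ≤ (2 ^ m - 1) * k :=
    hfib ▸ Nat.mul_le_mul hImgle hKle
  have heq : Img.card * Kset.card = (2 ^ m - 1) * k := by
    rw [← hfib, hNZcard, hprod]
  have hKeq : Kset.card = k := by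
    by_contra hne
    have : Kset.card < k := lt_of_le_of_ne hKle hne
    have : Img.card * Kset.card < (2 ^ m - 1) * k := by
      calc Img.card * Kset.card ≤ (2 ^ m - 1) * Kset.card := Nat.mul_le_mul_right _ hImgle
        _ < (2 ^ m - 1) * k := (Nat.mul_lt_mul_left hKpos).mpr this
    omega
  have hImgeq : Img.card = 2 ^ m - 1 := by
    rw [hKeq] at heq
    exact Nat.eq_of_mul_eq_mul_right (by omega) heq
  have hImgSstar : Img = Sstar :=
    Finset.eq_of_subset_of_card_le hImgsub (by omega)
  have hsc := Finset.card_le_card hImgsub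
  refine ⟨by omega, ?_⟩
  intro y hy1 hy2
  have hymem : y ∈ Img := by
    rw [hImgSstar, hSstar, Finset.mem_filter]
    exact ⟨Finset.mem_univ _, hy1, hy2⟩
  obtain ⟨x₀, hx₀NZ, hx₀⟩ := Finset.mem_image.mp (hImg ▸ hymem)
  rw [fiber_card_eq k (by omega) y hy2 x₀ hx₀, ← hKset, hKeq]

-- counting the big-trace-one set
lemma A1_card (hm : 1 ≤ m) :
    (Finset.univ.filter (fun x : Fq m => ptr m (2 * m) x = 1)).card = 2 ^ (2 * m - 1) := by
  have hvals : ∀ x ∈ (Finset.univ : Finset (Fq m)), ptr m (2 * m) x = 0 ∨ ptr m (2 * m) x = 1 :=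
    fun x _ => ptr_dichotomy (2 * m) x (pow_card_fq hm x)
  obtain ⟨x₀, -, hx₀⟩ := exists_ptr_one hm (2 * m) (by omega) Finset.univ
    (by rw [Finset.card_univ, card_Fq hm]; exact Nat.pow_lt_pow_right (by norm_num) (by omega))
    (fun x _ => pow_card_fq hm x)
  have h := pair_count Finset.univ (ptr m (2 * m)) hvals x₀ (fun x _ => Finset.mem_univ _)
    (fun x _ => by rw [ptr_add, hx₀])
  rw [Finset.card_univ, card_Fq hm] at h
  have h2 : 2 ^ (2 * m) = 2 * 2 ^ (2 * m - 1) := by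
    rw [← pow_succ']
    congr 1
    omega
  omega
-- the subfield as a filter
lemma S_card (hm : 1 ≤ m) :
    (Finset.univ.filter (fun y : Fq m => y ^ 2 ^ m = y)).card = 2 ^ m := by
  set S := Finset.univ.filter (fun y : Fq m => y ^ 2 ^ m = y) with hS
  have h1 := Finset.card_filter_add_card_filter_not (s := S) (p := fun y => y ≠ 0)
  have h2 : S.filter (fun y => y ≠ 0)
      = Finset.univ.filter (fun y : Fq m => y ^ 2 ^ m = y ∧ y ≠ 0) := by
    rw [hS, Finset.filter_filter]
  have h3 : S.filter (fun y => ¬ y ≠ 0) = {0} := by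
    ext y
    simp only [hS, Finset.filter_filter, Finset.mem_filter, Finset.mem_univ, true_and,
      not_not, Finset.mem_singleton]
    constructor
    · exact fun h => h.2
    · rintro rfl
      exact ⟨zero_pow (by positivity), rfl⟩
  rw [h2, h3, (key_counts hm).1, Finset.card_singleton] at h1
  have : 1 ≤ 2 ^ m := Nat.one_le_two_pow
  omega
-- trace-one set inside the subfield
lemma T1S_card (hm : 1 ≤ m) :
    ((Finset.univ.filter (fun y : Fq m => y ^ 2 ^ m = y)).filter
      (fun y => ptr m m y = 1)).card = 2 ^ (m - 1) := by
  set S := Finset.univ.filter (fun y : Fq m => y ^ 2 ^ m = y) with hS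
  have hmem : ∀ y ∈ S, y ^ 2 ^ m = y := fun y hy => (Finset.mem_filter.mp hy).2
  have hvals : ∀ y ∈ S, ptr m m y = 0 ∨ ptr m m y = 1 :=
    fun y hy => ptr_dichotomy m y (hmem y hy)
  obtain ⟨y₀, hy₀S, hy₀⟩ := exists_ptr_one hm m hm S
    (by rw [S_card hm]; exact Nat.pow_lt_pow_right (by norm_num) (by omega)) hmem
  have hclosed : ∀ y ∈ S, y + y₀ ∈ S := by
    intro y hy
    rw [hS, Finset.mem_filter]
    exact ⟨Finset.mem_univ _, by rw [add_pow_char_pow, hmem y hy, hmem y₀ hy₀S]⟩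
  have h := pair_count S (ptr m m) hvals y₀ hclosed (fun y _ => by rw [ptr_add, hy₀])
  rw [S_card hm] at h
  have h2 : 2 ^ m = 2 * 2 ^ (m - 1) := by
    rw [← pow_succ']
    congr 1
    omega
  omega
-- the B set
lemma B1_card (hm : 1 ≤ m) :
    (Finset.univ.filter (fun x : Fq m => ptr m m (x ^ (2 ^ m + 1)) = 1)).card
      = 2 ^ (m - 1) * (2 ^ m + 1) := by
  set B1 := Finset.univ.filter (fun x : Fq m => ptr m m (x ^ (2 ^ m + 1)) = 1) with hB1
  set T1S := (Finset.univ.filter (fun y : Fq m => y ^ 2 ^ m = y)).filter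
      (fun y => ptr m m y = 1) with hT1S
  have h1 : B1.card = ∑ y ∈ T1S, (B1.filter (fun x => x ^ (2 ^ m + 1) = y)).card := by
    apply Finset.card_eq_sum_card_fiberwise
    intro x hx
    rw [Finset.mem_coe, hB1, Finset.mem_filter] at hx
    rw [Finset.mem_coe, hT1S, Finset.mem_filter, Finset.mem_filter]
    exact ⟨⟨Finset.mem_univ _, norm_mem hm x⟩, hx.2⟩
  rw [h1, Finset.sum_congr rfl (fun y hy => ?_), Finset.sum_const, smul_eq_mul,
    T1S_card hm]
  -- each fiber has card 2^m+1
  rw [hT1S, Finset.mem_filter, Finset.mem_filter] at hy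
  obtain ⟨⟨-, hyS⟩, hyT⟩ := hy
  have hyne : y ≠ 0 := by
    rintro rfl
    rw [ptr_zero] at hyT
    exact one_ne_zero hyT.symm
  have h2 : B1.filter (fun x => x ^ (2 ^ m + 1) = y)
      = Finset.univ.filter (fun x : Fq m => x ^ (2 ^ m + 1) = y) := by
    ext x
    simp only [hB1, Finset.filter_filter, Finset.mem_filter, Finset.mem_univ, true_and]
    constructor
    · exact fun h => h.2
    · intro h
      exact ⟨by rw [h, hyT], h⟩
  rw [h2]
  exact (key_counts hm).2 y hyS hyne

lemma ptr_split (x : Fq m) : ptr m (2 * m) x = ptr m m (x + x ^ 2 ^ m) := by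
  have h1 : ptr m m (x + x ^ 2 ^ m)
      = ptr m m x + ∑ i ∈ Finset.range m, x ^ 2 ^ (m + i) := by
    unfold ptr
    rw [← Finset.sum_add_distrib]
    refine Finset.sum_congr rfl fun i _ => ?_
    rw [add_pow_char_pow, ← pow_mul, ← pow_add]
  rw [h1]
  unfold ptr
  have hr : Finset.range (2 * m) = Finset.range (m + m) := by rw [two_mul]
  rw [hr, Finset.sum_range_add]
lemma norm_expand (x : Fq m) :
    (1 + x) ^ (2 ^ m + 1) = 1 + ((x + x ^ 2 ^ m) + x ^ (2 ^ m + 1)) := by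
  have h1 : (1 + x) ^ (2 ^ m + 1) = (1 + x ^ 2 ^ m) * (1 + x) := by
    rw [pow_succ, add_pow_char_pow, one_pow]
  rw [h1, pow_succ]
  ring
lemma ptr_one_val : ptr m m 1 = (m : Fq m) := by
  unfold ptr
  simp
lemma key_iff (hm : 1 ≤ m) (x : Fq m) :
    (ptr m (2 * m) x + ptr m m (x ^ (2 ^ m + 1)) = 1)
      ↔ ptr m m ((1 + x) ^ (2 ^ m + 1)) = 1 + (m : Fq m) := by
  have e : ptr m m ((1 + x) ^ (2 ^ m + 1))
      = (m : Fq m) + (ptr m (2 * m) x + ptr m m (x ^ (2 ^ m + 1))) := by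
    rw [norm_expand, ptr_add, ptr_add, ptr_one_val, ptr_split]
  rw [e, add_comm 1 ((m : Fq m))]
  exact ⟨fun h => by rw [h], fun h => by exact add_left_cancel h⟩

lemma Dtwo_eq (hm : 1 ≤ m) : Dtwo m = Finset.univ.filter
    (fun x : Fq m => ptr m (2 * m) x = 1 ∧ ptr m m (x ^ (2 ^ m + 1)) = 1) := by
  ext x
  have h1 : subTr m (x + fieldConj m x) = ptr m (2 * m) x := by
    rw [ptr_split]; rfl
  have h2 : x * fieldConj m x = x ^ (2 ^ m + 1) := by
    rw [fieldConj, pow_succ]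
    exact mul_comm x _
  have h3 : subTr m (x * fieldConj m x) = ptr m m (x ^ (2 ^ m + 1)) := by
    rw [h2]; rfl
  simp only [Dtwo, Finset.mem_filter, Finset.mem_univ, true_and, h1, h3]
  constructor
  · rintro ⟨-, h, h'⟩; exact ⟨h, h'⟩
  · rintro ⟨h, h'⟩
    refine ⟨?_, h, h'⟩
    rintro rfl
    rw [ptr_zero] at h
    exact one_ne_zero h.symm

lemma main_identity (hm : 1 ≤ m) :
    (Finset.univ.filter (fun x : Fq m => ptr m (2 * m) x = 1)).card
      + (Finset.univ.filter (fun x : Fq m => ptr m m (x ^ (2 ^ m + 1)) = 1)).card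
    = (Finset.univ.filter
        (fun x : Fq m => ptr m (2 * m) x + ptr m m (x ^ (2 ^ m + 1)) = 1)).card
      + 2 * (Dtwo m).card := by
  rw [Dtwo_eq hm]
  rw [Finset.card_filter, Finset.card_filter, Finset.card_filter, Finset.card_filter,
    ← Finset.sum_add_distrib, Finset.mul_sum, ← Finset.sum_add_distrib]
  refine Finset.sum_congr rfl fun x _ => ?_
  have h01 : (0 : Fq m) ≠ 1 := fun h => one_ne_zero h.symm
  have h11 : (1 : Fq m) + 1 = 0 := CharTwo.add_self_eq_zero 1
  rcases ptr_dichotomy (2 * m) x (pow_card_fq hm x) with ha | ha <;>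
    rcases ptr_dichotomy m (x ^ (2 ^ m + 1)) (norm_mem hm x) with hb | hb <;>
      simp [ha, hb, h01, h11]

lemma shift_card (P : Fq m → Prop) :
    (Finset.univ.filter (fun x : Fq m => P (1 + x))).card
      = (Finset.univ.filter (fun w : Fq m => P w)).card := by
  have h11 : ∀ a : Fq m, (1 : Fq m) + (1 + a) = a := fun a => by
    rw [← add_assoc, CharTwo.add_self_eq_zero, zero_add]
  apply Finset.card_nbij' (fun x => 1 + x) (fun w => 1 + w)
  · intro a ha
    simp only [Finset.mem_coe, Finset.mem_filter, Finset.mem_univ, true_and] at ha ⊢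
    exact ha
  · intro a ha
    simp only [Finset.mem_coe, Finset.mem_filter, Finset.mem_univ, true_and] at ha ⊢
    rw [h11]
    exact ha
  · intro a _; exact h11 a
  · intro a _; exact h11 a

lemma C1_card (hm : 1 ≤ m) :
    (Finset.univ.filter
        (fun x : Fq m => ptr m (2 * m) x + ptr m m (x ^ (2 ^ m + 1)) = 1)).card
      = (Finset.univ.filter
        (fun w : Fq m => ptr m m (w ^ (2 ^ m + 1)) = 1 + (m : Fq m))).card := by
  rw [Finset.filter_congr (fun x _ => key_iff hm x)]
  exact shift_card (fun w => ptr m m (w ^ (2 ^ m + 1)) = 1 + (m : Fq m))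

lemma C1_even (hm : 1 ≤ m) (hme : Even m) :
    (Finset.univ.filter
        (fun x : Fq m => ptr m (2 * m) x + ptr m m (x ^ (2 ^ m + 1)) = 1)).card
      = 2 ^ (m - 1) * (2 ^ m + 1) := by
  have hcast : (m : Fq m) = 0 := by
    rw [CharP.cast_eq_zero_iff (Fq m) 2 m]
    exact hme.two_dvd
  rw [C1_card hm, hcast, add_zero, B1_card hm]

lemma C1_odd (hm : 1 ≤ m) (hmo : Odd m) :
    (Finset.univ.filter
        (fun x : Fq m => ptr m (2 * m) x + ptr m m (x ^ (2 ^ m + 1)) = 1)).card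
      = 2 ^ (2 * m) - 2 ^ (m - 1) * (2 ^ m + 1) := by
  have hcast : (m : Fq m) = 1 := by
    have h2 : (2 : ℕ) ∣ (m - 1) := by
      obtain ⟨j, hj⟩ := hmo
      exact ⟨j, by omega⟩
    have h0 : ((m - 1 : ℕ) : Fq m) = 0 := (CharP.cast_eq_zero_iff (Fq m) 2 (m - 1)).mpr h2
    have h3 : ((m : ℕ) : Fq m) = ((m - 1 : ℕ) : Fq m) + 1 := by
      calc ((m : ℕ) : Fq m) = (((m - 1) + 1 : ℕ) : Fq m) :=
            congrArg (fun t : ℕ => (t : Fq m)) (by omega)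
        _ = ((m - 1 : ℕ) : Fq m) + 1 := by push_cast; ring
    rw [h3, h0, zero_add]
  have h0 : (1 : Fq m) + (m : Fq m) = 0 := by
    rw [hcast, CharTwo.add_self_eq_zero]
  rw [C1_card hm, h0]
  have hsplit := Finset.card_filter_add_card_filter_not
    (s := (Finset.univ : Finset (Fq m)))
    (p := fun w => ptr m m (w ^ (2 ^ m + 1)) = 1)
  have hneg : Finset.univ.filter (fun w : Fq m => ¬ ptr m m (w ^ (2 ^ m + 1)) = 1)
      = Finset.univ.filter (fun w : Fq m => ptr m m (w ^ (2 ^ m + 1)) = 0) := by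
    apply Finset.filter_congr
    intro w _
    rcases ptr_dichotomy m (w ^ (2 ^ m + 1)) (norm_mem hm w) with h | h <;>
      simp [h]
  rw [hneg, B1_card hm, Finset.card_univ, card_Fq hm] at hsplit
  omega

theorem final (hm : 1 ≤ m) :
    (Even m → (Dtwo m).card = 2 ^ (2 * m - 2)) ∧
    (Odd m → (Dtwo m).card = 2 ^ (2 * m - 2) + 2 ^ (m - 1)) := by
  have hA := A1_card hm
  have hB := B1_card hm
  have hI := main_identity hm
  have e1 : 2 ^ (2 * m - 1) = 2 * 2 ^ (2 * m - 2) := by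
    rw [(by omega : 2 * m - 1 = (2 * m - 2) + 1), pow_succ']
  have e2 : 2 ^ (2 * m) = 2 * 2 ^ (2 * m - 1) := by
    conv_lhs => rw [(by omega : 2 * m = (2 * m - 1) + 1)]
    rw [pow_succ']
  have e3 : 2 ^ (m - 1) * (2 ^ m + 1) = 2 ^ (2 * m - 1) + 2 ^ (m - 1) := by
    rw [(by omega : 2 * m - 1 = (m - 1) + m), pow_add]
    ring
  obtain ⟨P, hP⟩ : ∃ P, 2 ^ (m - 1) * (2 ^ m + 1) = P := ⟨_, rfl⟩
  rw [hP] at hB e3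
  constructor
  · intro hme
    rw [C1_even hm hme, hA, hB, hP] at hI
    omega
  · intro hmo
    rw [C1_odd hm hmo, hA, hB, hP] at hI
    have hmle : 2 ^ (m - 1) ≤ 2 ^ (2 * m - 1) := Nat.pow_le_pow_right (by norm_num) (by omega)
    omega

end CardDtwoAux

/-- For `n = 2m`, `q = 2^n` and
`D = {x ∈ F_q^* : Tr^m(x + x̄) = Tr^m(x·x̄) = 1}` one has `|D| = 2^{n−2}`
if `m` is even, and `|D| = 2^{n−2} + 2^{m−1}` if `m` is odd. -/
theorem card_Dtwo (m : ℕ) (hm : 1 ≤ m) :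
    (Even m → (Dtwo m).card = 2 ^ (2 * m - 2)) ∧
    (Odd m → (Dtwo m).card = 2 ^ (2 * m - 2) + 2 ^ (m - 1)) :=
  CardDtwoAux.final hm
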